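/- For fixed 0 < R < 1, 0 < ε < 1 and q ≥ 2, if 0 < R ≤ (1−ε)/(1+(q^{ℓ+1}−1)ε), then the value of −f at its maximizer t₁ = q^{ℓ+1}ε/(1+(q^{ℓ+1}−1)ε) equals (ℓ+1)(1−R) − log_q(1+(q^{ℓ+1}−1)ε), where f(t) = −(ℓ+1)(1−R−t) + h(t) + t log_q ε + (1−t) log_q(1−ε) and h is the q-ary binary entropy. -/

import Mathlib

/-- The binary entropy function in `q`-its: `h(t) = -t log_q t - (1-t) log_q(1-t)`. -/
noncomputable def entq (q t : ℝ) : ℝ := -t * Real.logb q t - (1 - t) * Real.logb q (1 - t)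

/-- If `0 < R ≤ (1-ε)/(1+(q^{ℓ+1}-1)ε)`, then at the maximizer
`t₁ = q^{ℓ+1}ε/(1+(q^{ℓ+1}-1)ε)` the value of `-f` equals
`(ℓ+1)(1-R) - log_q(1+(q^{ℓ+1}-1)ε)`, where
`f(t) = -(ℓ+1)(1-R-t) + h(t) + t log_q ε + (1-t) log_q(1-ε)`. -/
theorem stmt_14 (q R ε : ℝ) (l : ℕ) (hq : 2 ≤ q)
    (hR0 : 0 < R) (hR1 : R < 1) (hε0 : 0 < ε) (hε1 : ε < 1)
    (hR : R ≤ (1 - ε) / (1 + (q ^ (l + 1) - 1) * ε)) :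
    -(-((l : ℝ) + 1) * (1 - R - q ^ (l + 1) * ε / (1 + (q ^ (l + 1) - 1) * ε))
        + entq q (q ^ (l + 1) * ε / (1 + (q ^ (l + 1) - 1) * ε))
        + (q ^ (l + 1) * ε / (1 + (q ^ (l + 1) - 1) * ε)) * Real.logb q ε
        + (1 - q ^ (l + 1) * ε / (1 + (q ^ (l + 1) - 1) * ε)) * Real.logb q (1 - ε))
      = ((l : ℝ) + 1) * (1 - R) - Real.logb q (1 + (q ^ (l + 1) - 1) * ε) := by
  have hq1 : (1 : ℝ) < q := lt_of_lt_of_le one_lt_two hq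
  have hq0 : (0 : ℝ) < q := lt_trans one_pos hq1
  have hQ1 : (1 : ℝ) < q ^ (l + 1) := one_lt_pow₀ hq1 (Nat.succ_ne_zero l)
  have hQ0 : (0 : ℝ) < q ^ (l + 1) := lt_trans one_pos hQ1
  have hD0 : (0 : ℝ) < 1 + (q ^ (l + 1) - 1) * ε := by nlinarith
  have hD : (1 + (q ^ (l + 1) - 1) * ε) ≠ 0 := ne_of_gt hD0
  have ht1 : 1 - q ^ (l + 1) * ε / (1 + (q ^ (l + 1) - 1) * ε)
      = (1 - ε) / (1 + (q ^ (l + 1) - 1) * ε) := by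
    rw [one_sub_div hD]; congr 1; ring
  have hQlog : Real.logb q (q ^ (l + 1)) = (l : ℝ) + 1 := by
    rw [Real.logb_pow, Real.logb_self_eq_one hq1]
    push_cast; ring
  have h1 : Real.logb q (q ^ (l + 1) * ε / (1 + (q ^ (l + 1) - 1) * ε))
      = ((l : ℝ) + 1) + Real.logb q ε - Real.logb q (1 + (q ^ (l + 1) - 1) * ε) := by
    rw [Real.logb_div (by positivity) hD, Real.logb_mul (ne_of_gt hQ0) (ne_of_gt hε0), hQlog]
  have h2 : Real.logb q ((1 - ε) / (1 + (q ^ (l + 1) - 1) * ε))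
      = Real.logb q (1 - ε) - Real.logb q (1 + (q ^ (l + 1) - 1) * ε) := by
    rw [Real.logb_div (by nlinarith) hD]
  rw [entq, ht1, h1, h2]
  have hsum : q ^ (l + 1) * ε / (1 + (q ^ (l + 1) - 1) * ε)
      + (1 - ε) / (1 + (q ^ (l + 1) - 1) * ε) = 1 := by
    rw [← add_div, div_eq_one_iff_eq hD]; ring
  linear_combination (-Real.logb q (1 + (q ^ (l + 1) - 1) * ε)) * hsum
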